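/- The two-qubit reduced state of the N-qubit W state (obtained by tracing out N-2 qubits) equals (2/N)|ψ^+⟩⟨ψ^+| + (1 - 2/N)|00⟩⟨00|, where |ψ^+⟩ = (|01⟩ + |10⟩)/√2, and this state is entangled for every N ≥ 2. -/

import Mathlib

open Matrix
open scoped ComplexOrder

/-- The `n`-qubit W state vector. -/
noncomputable def Wvec (n : ℕ) : (Fin n → Fin 2) → ℂ := fun x =>
  if (Finset.univ.filter fun i => x i = 1).card = 1 then ((Real.sqrt n)⁻¹ : ℝ) else 0

/-- The outer product `|v⟩⟨v|`. -/
def outer {ι : Type*} (v : ι → ℂ) : Matrix ι ι ℂ :=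
  Matrix.of fun x y => v x * star (v y)

/-- The two-qubit Bell state `|ψ⁺⟩ = (|01⟩+|10⟩)/√2`. -/
noncomputable def psiPlus : Fin 2 × Fin 2 → ℂ := fun a =>
  if a.1 ≠ a.2 then ((Real.sqrt 2)⁻¹ : ℝ) else 0

/-- The two-qubit vacuum `|00⟩`. -/
def vac2 : Fin 2 × Fin 2 → ℂ := fun a => if a = (0, 0) then 1 else 0

/-- Kronecker product of two one-qubit matrices. -/
def kron2 (A B : Matrix (Fin 2) (Fin 2) ℂ) :
    Matrix (Fin 2 × Fin 2) (Fin 2 × Fin 2) ℂ :=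
  Matrix.of fun p q => A p.1 q.1 * B p.2 q.2


lemma count_wt_zero (M : ℕ) :
    (Finset.univ.filter fun z : Fin M → Fin 2 =>
      (Finset.univ.filter fun j => z j = 1).card = 0).card = 1 := by
  have h2 : ∀ x : Fin 2, ¬ x = 1 ↔ x = 0 := by decide
  have : (Finset.univ.filter fun z : Fin M → Fin 2 =>
      (Finset.univ.filter fun j => z j = 1).card = 0) = {fun _ => 0} := by
    ext z
    simp [Finset.card_eq_zero, Finset.filter_eq_empty_iff, funext_iff, h2]
  rw [this, Finset.card_singleton]

lemma count_wt_one (M : ℕ) :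
    (Finset.univ.filter fun z : Fin M → Fin 2 =>
      (Finset.univ.filter fun j => z j = 1).card = 1).card = M := by
  have h2 : ∀ x : Fin 2, ¬ x = 1 ↔ x = 0 := by decide
  have hinj : Function.Injective (fun j : Fin M => (fun i => if i = j then (1 : Fin 2) else 0)) := by
    intro j j' h
    have := congrFun h j
    simp only [if_pos rfl] at this
    by_contra hne
    rw [if_neg hne] at this
    exact absurd this (by decide)
  have hset : (Finset.univ.filter fun z : Fin M → Fin 2 =>
      (Finset.univ.filter fun j => z j = 1).card = 1)
      = Finset.univ.image (fun j : Fin M => (fun i => if i = j then (1 : Fin 2) else 0)) := by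
    ext z
    simp only [Finset.mem_filter, Finset.mem_univ, true_and, Finset.mem_image]
    constructor
    · intro h
      obtain ⟨j, hj⟩ := Finset.card_eq_one.mp h
      refine ⟨j, funext fun i => ?_⟩
      by_cases hij : i = j
      · subst hij
        have : i ∈ Finset.univ.filter fun j => z j = 1 := by rw [hj]; exact Finset.mem_singleton_self _
        simp only [Finset.mem_filter] at this
        simp [this.2]
      · have : i ∉ Finset.univ.filter fun j => z j = 1 := by
          rw [hj]; simp [hij]
        simp only [Finset.mem_filter, Finset.mem_univ, true_and] at this
        simp [hij, (h2 (z i)).mp this]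
    · rintro ⟨j, rfl⟩
      have : (Finset.univ.filter fun i => (if i = j then (1 : Fin 2) else 0) = 1) = {j} := by
        ext i
        by_cases hij : i = j <;> simp [hij]
      rw [this, Finset.card_singleton]
  rw [hset, Finset.card_image_of_injective _ hinj]
  simp

set_option maxHeartbeats 2000000 in
lemma kron2_quad_nonneg {A B : Matrix (Fin 2) (Fin 2) ℂ} (hA : A.PosSemidef)
    (hB : B.PosSemidef) (v : Fin 2 × Fin 2 → ℂ) :
    0 ≤ star v ⬝ᵥ (kron2 A B *ᵥ v) := by
  obtain ⟨U, rfl⟩ : ∃ U : Matrix (Fin 2) (Fin 2) ℂ, A = Uᴴ * U := by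
    open scoped MatrixOrder in exact CStarAlgebra.nonneg_iff_eq_star_mul_self.mp hA.nonneg
  obtain ⟨V, rfl⟩ : ∃ V : Matrix (Fin 2) (Fin 2) ℂ, B = Vᴴ * V := by
    open scoped MatrixOrder in exact CStarAlgebra.nonneg_iff_eq_star_mul_self.mp hB.nonneg
  have key : star v ⬝ᵥ (kron2 (Uᴴ * U) (Vᴴ * V) *ᵥ v)
      = ∑ k : Fin 2, ∑ l : Fin 2,
          star (∑ q : Fin 2 × Fin 2, U k q.1 * V l q.2 * v q) *
          (∑ q : Fin 2 × Fin 2, U k q.1 * V l q.2 * v q) := by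
    simp only [dotProduct, mulVec, kron2, Matrix.mul_apply, Matrix.conjTranspose_apply,
      Fintype.sum_prod_type, Fin.sum_univ_two, Matrix.of_apply, Pi.star_apply, star_add,
      StarMul.star_mul]
    ring_nf
  rw [key]
  exact Finset.sum_nonneg fun k _ => Finset.sum_nonneg fun l _ => star_mul_self_nonneg _

lemma part1 (N : ℕ) (hN : 2 ≤ N) (e : Fin 2 ⊕ Fin (N - 2) ≃ Fin N) :
    (Matrix.of fun a b : Fin 2 × Fin 2 =>
        ∑ z : Fin (N - 2) → Fin 2,
          Wvec N (fun i => Sum.elim ![a.1, a.2] z (e.symm i)) *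
            star (Wvec N (fun i => Sum.elim ![b.1, b.2] z (e.symm i))))
      = ((2 : ℂ) / (N : ℂ)) • outer psiPlus + (1 - (2 : ℂ) / (N : ℂ)) • outer vac2 := by
  have hN0 : (0:ℝ) ≤ (N:ℝ) := by positivity
  have hNC : (N : ℂ) ≠ 0 := Nat.cast_ne_zero.mpr (by omega)
  -- card over Fin N splits
  have hcard : ∀ f : Fin 2 ⊕ Fin (N-2) → Fin 2,
      (Finset.univ.filter fun i : Fin N => f (e.symm i) = 1).card
      = (Finset.univ.filter fun i : Fin 2 => f (Sum.inl i) = 1).card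
        + (Finset.univ.filter fun j : Fin (N-2) => f (Sum.inr j) = 1).card := by
    intro f
    have hmap : (Finset.univ.filter fun i : Fin N => f (e.symm i) = 1)
        = (Finset.univ.filter fun s => f s = 1).map e.toEmbedding := by
      ext i
      simp only [Finset.mem_filter, Finset.mem_univ, true_and, Finset.mem_map,
        Equiv.coe_toEmbedding]
      constructor
      · intro h; exact ⟨e.symm i, by simpa using h, by simp⟩
      · rintro ⟨s, hs, rfl⟩; simpa using hs
    rw [hmap, Finset.card_map]
    rw [Finset.card_filter, Finset.card_filter, Finset.card_filter, Fintype.sum_sum_type]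
  -- weight of a two-bit string
  have hw2 : ∀ a : Fin 2 × Fin 2,
      (Finset.univ.filter fun i : Fin 2 => ![a.1, a.2] i = 1).card
      = (if a.1 = 1 then 1 else 0) + (if a.2 = 1 then 1 else 0) := by
    rintro ⟨a1, a2⟩; fin_cases a1 <;> fin_cases a2 <;> decide
  have hW : ∀ (a : Fin 2 × Fin 2) (z : Fin (N-2) → Fin 2),
      Wvec N (fun i => Sum.elim ![a.1, a.2] z (e.symm i))
        = if ((if a.1 = 1 then 1 else 0) + (if a.2 = 1 then 1 else 0)
            + (Finset.univ.filter fun j => z j = 1).card = 1)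
          then (((Real.sqrt N)⁻¹ : ℝ) : ℂ) else 0 := by
    intro a z
    rw [Wvec, hcard (Sum.elim ![a.1, a.2] z)]
    simp only [Sum.elim_inl, Sum.elim_inr, hw2]
    rw [← hw2 a]
    congr
  have hc2 : (((Real.sqrt N)⁻¹ : ℝ) : ℂ) * star (((Real.sqrt N)⁻¹ : ℝ) : ℂ)
      = (((N:ℝ)⁻¹ : ℝ) : ℂ) := by
    rw [Complex.star_def, Complex.conj_ofReal, ← Complex.ofReal_mul, ← mul_inv,
      Real.mul_self_sqrt hN0]
  have hss : ((Real.sqrt N : ℝ) : ℂ) * ((Real.sqrt N : ℝ) : ℂ) = (N:ℂ) := by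
    rw [← Complex.ofReal_mul, Real.mul_self_sqrt hN0]; norm_num
  have hentry : ∀ a b : Fin 2 × Fin 2,
      (∑ z : Fin (N - 2) → Fin 2,
          Wvec N (fun i => Sum.elim ![a.1, a.2] z (e.symm i)) *
            star (Wvec N (fun i => Sum.elim ![b.1, b.2] z (e.symm i))))
      = ((Finset.univ.filter fun z : Fin (N-2) → Fin 2 =>
          ((if a.1 = 1 then 1 else 0) + (if a.2 = 1 then 1 else 0)
            + (Finset.univ.filter fun j => z j = 1).card = 1
           ∧ (if b.1 = 1 then 1 else 0) + (if b.2 = 1 then 1 else 0)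
            + (Finset.univ.filter fun j => z j = 1).card = 1)).card : ℂ)
        * (((N:ℝ)⁻¹ : ℝ) : ℂ) := by
    intro a b
    rw [show (∑ z : Fin (N - 2) → Fin 2,
          Wvec N (fun i => Sum.elim ![a.1, a.2] z (e.symm i)) *
            star (Wvec N (fun i => Sum.elim ![b.1, b.2] z (e.symm i))))
        = ∑ z : Fin (N - 2) → Fin 2,
            (if ((if a.1 = 1 then 1 else 0) + (if a.2 = 1 then 1 else 0)
              + (Finset.univ.filter fun j => z j = 1).card = 1
             ∧ (if b.1 = 1 then 1 else 0) + (if b.2 = 1 then 1 else 0)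
              + (Finset.univ.filter fun j => z j = 1).card = 1)
            then (((N:ℝ)⁻¹ : ℝ) : ℂ) else 0)
      from Finset.sum_congr rfl fun z _ => by
        rw [hW a z, hW b z]
        by_cases h1 : ((if a.1 = 1 then 1 else 0) + (if a.2 = 1 then 1 else 0)
              + (Finset.univ.filter fun j => z j = 1).card = 1) <;>
        by_cases h2 : ((if b.1 = 1 then 1 else 0) + (if b.2 = 1 then 1 else 0)
              + (Finset.univ.filter fun j => z j = 1).card = 1) <;>
          simp [h1, h2, hc2, ← mul_inv, hss]]
    rw [← Finset.sum_filter, Finset.sum_const, nsmul_eq_mul]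
  have hfc : ∀ (p q : (Fin (N-2) → Fin 2) → Prop) (ip : DecidablePred p)
      (iq : DecidablePred q), (∀ z, p z ↔ q z) →
      (Finset.univ.filter p).card = (Finset.univ.filter q).card := by
    intro p q ip iq h
    have : (Finset.univ.filter p) = (Finset.univ.filter q) := by
      ext z; simp [Finset.mem_filter, h z]
    rw [this]
  have hs2 : ((Real.sqrt 2 : ℝ) : ℂ) * ((Real.sqrt 2 : ℝ) : ℂ) = 2 := by
    rw [← Complex.ofReal_mul, Real.mul_self_sqrt (by norm_num)]; norm_num
  ext a b
  rw [Matrix.of_apply, hentry a b]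
  fin_cases a <;> fin_cases b <;>
    simp only [Fin.mk_zero, Fin.mk_one,
      show ¬((0:Fin 2)=1) from by decide, show ((1:Fin 2)=1) from rfl,
      if_true, if_false, ite_true, ite_false, eq_self_iff_true, zero_add, add_zero,
      and_self] <;>
    (first
      | rw [hfc _ (fun z => (Finset.univ.filter fun j => z j = 1).card = 1) _ _
            (fun z => by omega), count_wt_one]
      | rw [hfc _ (fun z => (Finset.univ.filter fun j => z j = 1).card = 0) _ _
            (fun z => by omega), count_wt_zero]
      | rw [hfc _ (fun z => False) _ (fun _ => instDecidableFalse) (fun z => iff_false_intro (by omega)), Finset.filter_false,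
            Finset.card_empty]) <;>
    simp [outer, psiPlus, vac2, Matrix.add_apply, Matrix.smul_apply]
  all_goals (first
    | (push_cast [Nat.cast_sub hN]; field_simp; try ring)
    | (rw [← mul_inv, hs2]; field_simp; try ring))
  all_goals (rw [sq]; exact hs2)

lemma not_sep (N : ℕ) (hN : 2 ≤ N) :
    ¬ ∃ (m : ℕ) (p : Fin m → ℝ) (A B : Fin m → Matrix (Fin 2) (Fin 2) ℂ),
        (∀ i, 0 ≤ p i) ∧ (∑ i, p i = 1) ∧
        (∀ i, (A i).PosSemidef) ∧ (∀ i, (B i).PosSemidef) ∧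
        ((2 : ℂ) / (N : ℂ)) • outer psiPlus + (1 - (2 : ℂ) / (N : ℂ)) • outer vac2
          = ∑ i, ((p i : ℂ)) • kron2 (A i) (B i) := by
  rintro ⟨m, p, A, B, hp, -, hA, hB, heq⟩
  have hNC : (N : ℂ) ≠ 0 := by
    exact_mod_cast Nat.cast_ne_zero.mpr (by omega)
  set v : Fin 2 × Fin 2 → ℂ := fun a => if a = (0,0) then 1 else if a = (1,1) then -(N:ℂ) else 0 with hv
  set ρ : Matrix (Fin 2 × Fin 2) (Fin 2 × Fin 2) ℂ :=
    ((2 : ℂ) / (N : ℂ)) • outer psiPlus + (1 - (2 : ℂ) / (N : ℂ)) • outer vac2 with hρ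
  -- the partial-transpose quadratic form
  have hQ1 : (∑ x : Fin 2 × Fin 2, ∑ y : Fin 2 × Fin 2,
        star (v x) * ρ (x.1, y.2) (y.1, x.2) * v y)
      = ∑ i, (p i : ℂ) * (star v ⬝ᵥ (kron2 (A i) ((B i)ᵀ) *ᵥ v)) := by
    calc (∑ x : Fin 2 × Fin 2, ∑ y : Fin 2 × Fin 2,
            star (v x) * ρ (x.1, y.2) (y.1, x.2) * v y)
        = ∑ x : Fin 2 × Fin 2, ∑ y : Fin 2 × Fin 2, ∑ i,
            (p i : ℂ) * (star (v x) * (A i x.1 y.1 * B i y.2 x.2) * v y) := by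
          refine Finset.sum_congr rfl fun x _ => Finset.sum_congr rfl fun y _ => ?_
          rw [heq]
          simp only [Matrix.sum_apply, Matrix.smul_apply, kron2, Matrix.of_apply, smul_eq_mul,
            Finset.mul_sum, Finset.sum_mul]
          refine Finset.sum_congr rfl fun i _ => by ring
      _ = ∑ i, (p i:ℂ) * ∑ x : Fin 2 × Fin 2, ∑ y : Fin 2 × Fin 2,
            star (v x) * (A i x.1 y.1 * B i y.2 x.2) * v y := by
          rw [show (∑ x : Fin 2 × Fin 2, ∑ y : Fin 2 × Fin 2, ∑ i,
              (p i : ℂ) * (star (v x) * (A i x.1 y.1 * B i y.2 x.2) * v y))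
            = ∑ x : Fin 2 × Fin 2, ∑ i, ∑ y : Fin 2 × Fin 2,
              (p i : ℂ) * (star (v x) * (A i x.1 y.1 * B i y.2 x.2) * v y)
            from Finset.sum_congr rfl fun x _ => Finset.sum_comm,
            Finset.sum_comm]
          simp only [← Finset.mul_sum]
      _ = ∑ i, (p i : ℂ) * (star v ⬝ᵥ (kron2 (A i) ((B i)ᵀ) *ᵥ v)) := by
          refine Finset.sum_congr rfl fun i _ => ?_
          congr 1
          simp only [dotProduct, mulVec, kron2, Matrix.of_apply, Matrix.transpose_apply,
            Finset.mul_sum, Pi.star_apply]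
          refine Finset.sum_congr rfl fun x _ => Finset.sum_congr rfl fun y _ => by ring
  have h1 : 0 ≤ ∑ x : Fin 2 × Fin 2, ∑ y : Fin 2 × Fin 2,
      star (v x) * ρ (x.1, y.2) (y.1, x.2) * v y := by
    rw [hQ1]
    refine Finset.sum_nonneg fun i _ => mul_nonneg ?_
      (kron2_quad_nonneg (hA i) ((hB i).transpose) v)
    exact Complex.zero_le_real.mpr (hp i)
  have h2 : (∑ x : Fin 2 × Fin 2, ∑ y : Fin 2 × Fin 2,
      star (v x) * ρ (x.1, y.2) (y.1, x.2) * v y) = -1 - 2/(N:ℂ) := by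
    have hs2 : ((Real.sqrt 2 : ℝ) : ℂ) * ((Real.sqrt 2 : ℝ) : ℂ) = 2 := by
      rw [← Complex.ofReal_mul, Real.mul_self_sqrt (by norm_num)]
      norm_num
    simp [hρ, hv, outer, psiPlus, vac2, Fintype.sum_prod_type, Fin.sum_univ_two,
      Matrix.add_apply, Matrix.smul_apply, Matrix.of_apply, smul_eq_mul, Prod.ext_iff]
    field_simp
    ring_nf
    have e2 : ((Real.sqrt 2 : ℝ) : ℂ)^2 = 2 := by rw [sq]; exact hs2
    have e4 : ((Real.sqrt 2 : ℝ) : ℂ)^4 = 4 := by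
      have : (4:ℕ) = 2*2 := by norm_num
      rw [this, pow_mul, e2]; norm_num
    rw [e2]
    ring
  rw [h2] at h1
  have hcast : ((-1 - 2/(N:ℝ) : ℝ) : ℂ) = -1 - 2/(N:ℂ) := by push_cast; ring
  rw [← hcast, Complex.zero_le_real] at h1
  have hNpos : (0:ℝ) < N := by exact_mod_cast (by omega : 0 < N)
  have : (0:ℝ) < 2/(N:ℝ) := by positivity
  linarith

/-- The two-qubit reduced state of `|W_N⟩` (keeping the qubits selected by `e`)
equals `(2/N)|ψ⁺⟩⟨ψ⁺| + (1-2/N)|00⟩⟨00|`, and this state is entangled (not separable)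
for every `N ≥ 2`. -/
theorem stmt6 (N : ℕ) (hN : 2 ≤ N) (e : Fin 2 ⊕ Fin (N - 2) ≃ Fin N) :
    (Matrix.of fun a b : Fin 2 × Fin 2 =>
        ∑ z : Fin (N - 2) → Fin 2,
          Wvec N (fun i => Sum.elim ![a.1, a.2] z (e.symm i)) *
            star (Wvec N (fun i => Sum.elim ![b.1, b.2] z (e.symm i))))
      = ((2 : ℂ) / (N : ℂ)) • outer psiPlus + (1 - (2 : ℂ) / (N : ℂ)) • outer vac2
    ∧ ¬ ∃ (m : ℕ) (p : Fin m → ℝ) (A B : Fin m → Matrix (Fin 2) (Fin 2) ℂ),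
        (∀ i, 0 ≤ p i) ∧ (∑ i, p i = 1) ∧
        (∀ i, (A i).PosSemidef) ∧ (∀ i, (B i).PosSemidef) ∧
        ((2 : ℂ) / (N : ℂ)) • outer psiPlus + (1 - (2 : ℂ) / (N : ℂ)) • outer vac2
          = ∑ i, ((p i : ℂ)) • kron2 (A i) (B i) := by
  exact ⟨part1 N hN e, not_sep N hN⟩
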